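/- arXiv:1907.00017 — 2 statements merged into one kernel-verified Lean document; each statement's English description precedes it below -/
import Mathlib

section
/- Let V_B be a real Hilbert space, T > 0, λ > 0, u₀ ∈ V_B, and let B : V_B → V_B^* be a linear bounded operator with ‖Bv‖_{V_B^*} ≤ β_B ‖v‖_{V_B} for all v ∈ V_B. Then the composed operator BK, defined by (BKv)(t) = B((Kv)(t)), maps L²(0,T;V_B) into L²(0,T;V_B^*), is affine-linear and bounded, and satisfies ‖BKv − Bu₀‖_{L²(0,T;V_B^*)} ≤ β_B (1 − e^{−λT}) ‖v‖_{L²(0,T;V_B)} for all v ∈ L²(0,T;V_B). -/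
open MeasureTheory Real Set NormedSpace
open scoped ENNReal NNReal

/-- The Volterra operator `(Kv)(t) = u₀ + ∫₀ᵗ λ e^{−λ(t−s)} v(s) ds`. -/
noncomputable def volterraK {X : Type*} [NormedAddCommGroup X] [NormedSpace ℝ X]
    (lam : ℝ) (u₀ : X) (v : ℝ → X) (t : ℝ) : X :=
  u₀ + ∫ s in Set.Ioc (0 : ℝ) t, (lam * Real.exp (-lam * (t - s))) • v s

set_option maxHeartbeats 1000000 in
private lemma volterra_ftc1 (lam t : ℝ) :
    ∫ s in (0:ℝ)..t, lam * Real.exp (-lam * (t - s)) = 1 - Real.exp (-lam * t) := by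
  have h : ∀ s ∈ uIcc (0:ℝ) t, HasDerivAt (fun s : ℝ => Real.exp (-lam * (t - s)))
      (lam * Real.exp (-lam * (t - s))) s := by
    intro s _
    have h1 : HasDerivAt (fun s : ℝ => -lam * (t - s)) lam s := by
      simpa using ((hasDerivAt_id s).const_sub t).const_mul (-lam)
    simpa [mul_comm] using h1.exp
  have hint : IntervalIntegrable (fun s => lam * Real.exp (-lam * (t - s))) volume 0 t :=
    (Continuous.intervalIntegrable (by continuity) _ _)
  have := intervalIntegral.integral_eq_sub_of_hasDerivAt h hint
  simpa using this

set_option maxHeartbeats 1000000 in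
private lemma volterra_ftc2 (lam s T : ℝ) :
    ∫ t in s..T, lam * Real.exp (-lam * (t - s)) = 1 - Real.exp (-lam * (T - s)) := by
  have h : ∀ t ∈ uIcc s T, HasDerivAt (fun t : ℝ => -Real.exp (-lam * (t - s)))
      (lam * Real.exp (-lam * (t - s))) t := by
    intro t _
    have h1 : HasDerivAt (fun t : ℝ => -lam * (t - s)) (-lam) t := by
      simpa using ((hasDerivAt_id t).sub_const s).const_mul (-lam)
    have := h1.exp.neg
    rw [show lam * Real.exp (-lam * (t - s)) = -(Real.exp (-lam * (t - s)) * -lam) by ring]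
    exact this
  have hint : IntervalIntegrable (fun t => lam * Real.exp (-lam * (t - s))) volume s T :=
    (Continuous.intervalIntegrable (by continuity) _ _)
  have := intervalIntegral.integral_eq_sub_of_hasDerivAt h hint
  rw [this]; simp [Real.exp_zero]; ring_nf

set_option maxHeartbeats 1000000 in
private lemma volterra_kmass1 {lam : ℝ} (hlam : 0 < lam) {t : ℝ} (ht : 0 ≤ t) :
    ∫⁻ s in Ioc (0:ℝ) t, ENNReal.ofReal (lam * Real.exp (-lam * (t - s)))
      = ENNReal.ofReal (1 - Real.exp (-lam * t)) := by
  rw [← ofReal_integral_eq_lintegral_ofReal]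
  · rw [← intervalIntegral.integral_of_le ht, volterra_ftc1]
  · exact (Continuous.integrableOn_Ioc (by continuity))
  · filter_upwards with s; positivity

set_option maxHeartbeats 1000000 in
private lemma volterra_kmass2 {lam : ℝ} (hlam : 0 < lam) {s T : ℝ} (hs : s ≤ T) :
    ∫⁻ t in Ioc s T, ENNReal.ofReal (lam * Real.exp (-lam * (t - s)))
      = ENNReal.ofReal (1 - Real.exp (-lam * (T - s))) := by
  rw [← ofReal_integral_eq_lintegral_ofReal]
  · rw [← intervalIntegral.integral_of_le hs, volterra_ftc2]
  · exact (Continuous.integrableOn_Ioc (by continuity))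
  · filter_upwards with t; positivity

set_option maxHeartbeats 1000000 in
private lemma volterra_F_sm {X : Type*} [NormedAddCommGroup X] [NormedSpace ℝ X]
    [CompleteSpace X] (lam : ℝ) {g : ℝ → X} (hg : StronglyMeasurable g) :
    StronglyMeasurable (fun t => ∫ s in Ioc (0:ℝ) t, (lam * Real.exp (-lam * (t - s))) • g s) := by
  have hset : MeasurableSet {q : ℝ × ℝ | 0 < q.2 ∧ q.2 ≤ q.1} :=
    (measurableSet_lt measurable_const measurable_snd).inter
      (measurableSet_le measurable_snd measurable_fst)
  have hH : StronglyMeasurable (fun q : ℝ × ℝ =>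
      Set.indicator {q : ℝ × ℝ | 0 < q.2 ∧ q.2 ≤ q.1}
        (fun q => (lam * Real.exp (-lam * (q.1 - q.2))) • g q.2) q) := by
    apply StronglyMeasurable.indicator _ hset
    exact ((continuous_const.mul ((continuous_const.mul
      (continuous_fst.sub continuous_snd)).rexp)).stronglyMeasurable).smul
      (hg.comp_measurable measurable_snd)
  have h2 := hH.integral_prod_right' (ν := volume)
  have heq0 : (fun t => ∫ s in Ioc (0:ℝ) t, (lam * Real.exp (-lam * (t - s))) • g s)
      = fun t => ∫ s, Set.indicator {q : ℝ × ℝ | 0 < q.2 ∧ q.2 ≤ q.1}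
        (fun q => (lam * Real.exp (-lam * (q.1 - q.2))) • g q.2) (t, s) := by
    funext t
    have heq : (fun s => Set.indicator {q : ℝ × ℝ | 0 < q.2 ∧ q.2 ≤ q.1}
        (fun q => (lam * Real.exp (-lam * (q.1 - q.2))) • g q.2) (t, s))
        = (Ioc (0:ℝ) t).indicator (fun s => (lam * Real.exp (-lam * (t - s))) • g s) := by
      funext s
      by_cases h : s ∈ Ioc (0:ℝ) t
      · rw [Set.indicator_of_mem h, Set.indicator_of_mem]
        exact ⟨h.1, h.2⟩
      · rw [Set.indicator_of_notMem h, Set.indicator_of_notMem]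
        simpa [Set.mem_Ioc] using h
    rw [heq, integral_indicator measurableSet_Ioc]
  rw [heq0]
  exact h2

set_option maxHeartbeats 1000000 in
private lemma volterra_F_bound {X : Type*} [NormedAddCommGroup X] [NormedSpace ℝ X]
    [CompleteSpace X] {T lam : ℝ} (hT : 0 < T) (hlam : 0 < lam) {g : ℝ → X}
    (hg : StronglyMeasurable g) :
    ∫⁻ t in Ioc (0:ℝ) T,
        (‖(∫ s in Ioc (0:ℝ) t, (lam * Real.exp (-lam * (t - s))) • g s)‖₊ : ℝ≥0∞) ^ 2
      ≤ ENNReal.ofReal (1 - Real.exp (-lam * T)) ^ 2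
          * ∫⁻ s in Ioc (0:ℝ) T, (‖g s‖₊ : ℝ≥0∞) ^ 2 := by
  set M : ℝ≥0∞ := ENNReal.ofReal (1 - Real.exp (-lam * T)) with hM
  set Kf : ℝ → ℝ → ℝ≥0∞ := fun t s => ENNReal.ofReal (lam * Real.exp (-lam * (t - s))) with hKf
  set φ : ℝ → ℝ≥0∞ := fun s => (‖g s‖₊ : ℝ≥0∞) with hφ
  have hφm : Measurable φ := hg.enorm
  have hK2 : Measurable (fun q : ℝ × ℝ => Kf q.1 q.2) :=
    ENNReal.measurable_ofReal.comp
      ((continuous_const.mul ((continuous_const.mul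
        (continuous_fst.sub continuous_snd)).rexp)).measurable)
  have hKm : ∀ t, Measurable (Kf t) := fun t =>
    ENNReal.measurable_ofReal.comp
      ((continuous_const.mul ((continuous_const.mul
        (continuous_const.sub continuous_id)).rexp)).measurable)
  -- step 1 : pointwise norm bound
  have step1 : ∀ t : ℝ,
      (‖(∫ s in Ioc (0:ℝ) t, (lam * Real.exp (-lam * (t - s))) • g s)‖₊ : ℝ≥0∞)
        ≤ ∫⁻ s in Ioc (0:ℝ) t, Kf t s * φ s := by
    intro t
    refine le_trans (enorm_integral_le_lintegral_enorm _) (le_of_eq ?_)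
    refine lintegral_congr fun s => ?_
    rw [enorm_smul, Real.enorm_eq_ofReal (by positivity)]; rfl
  -- step 2 : Cauchy-Schwarz in s
  have step2 : ∀ t ∈ Ioc (0:ℝ) T,
      (∫⁻ s in Ioc (0:ℝ) t, Kf t s * φ s) ^ 2
        ≤ M * ∫⁻ s in Ioc (0:ℝ) t, Kf t s * φ s ^ 2 := by
    intro t ht
    have hconj : Real.HolderConjugate 2 2 := Real.HolderConjugate.two_two
    have hfm : AEMeasurable (fun s => (Kf t s) ^ (1/2 : ℝ))
        (volume.restrict (Ioc (0:ℝ) t)) := ((hKm t).pow_const _).aemeasurable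
    have hgm : AEMeasurable (fun s => (Kf t s) ^ (1/2 : ℝ) * φ s)
        (volume.restrict (Ioc (0:ℝ) t)) :=
      (((hKm t).pow_const _).mul hφm).aemeasurable
    have holder := ENNReal.lintegral_mul_le_Lp_mul_Lq (volume.restrict (Ioc (0:ℝ) t))
      hconj hfm hgm
    have hsplit : ∀ x : ℝ≥0∞, x ^ (1/2 : ℝ) * x ^ (1/2 : ℝ) = x := by
      intro x
      rw [← ENNReal.rpow_add_of_nonneg _ _ (by norm_num) (by norm_num)]
      norm_num
    have h1 : (fun s => (Kf t s) ^ (1/2 : ℝ) * ((Kf t s) ^ (1/2 : ℝ) * φ s))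
        = fun s => Kf t s * φ s := by
      funext s; rw [← mul_assoc, hsplit]
    have h2 : ∀ s, ((Kf t s) ^ (1/2 : ℝ)) ^ (2 : ℝ) = Kf t s := by
      intro s
      rw [← ENNReal.rpow_mul]; norm_num
    have h3 : ∀ s, ((Kf t s) ^ (1/2 : ℝ) * φ s) ^ (2 : ℝ) = Kf t s * φ s ^ 2 := by
      intro s
      rw [ENNReal.mul_rpow_of_nonneg _ _ (by norm_num : (0:ℝ) ≤ 2), h2,
        ← ENNReal.rpow_natCast (φ s) 2]
      norm_num
    rw [Pi.mul_def] at holder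
    simp only [h1] at holder
    simp only [h2, h3] at holder
    have hAM : ∫⁻ s in Ioc (0:ℝ) t, Kf t s ≤ M := by
      rw [volterra_kmass1 hlam ht.1.le, hM]
      apply ENNReal.ofReal_le_ofReal
      have : Real.exp (-lam * T) ≤ Real.exp (-lam * t) :=
        Real.exp_le_exp.mpr (by nlinarith [ht.2])
      linarith
    calc (∫⁻ s in Ioc (0:ℝ) t, Kf t s * φ s) ^ 2
        ≤ ((∫⁻ s in Ioc (0:ℝ) t, Kf t s) ^ (1/2 : ℝ)
            * (∫⁻ s in Ioc (0:ℝ) t, Kf t s * φ s ^ 2) ^ (1/2 : ℝ)) ^ 2 :=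
          pow_le_pow_left' holder 2
      _ = (∫⁻ s in Ioc (0:ℝ) t, Kf t s) * (∫⁻ s in Ioc (0:ℝ) t, Kf t s * φ s ^ 2) := by
          rw [mul_pow, ← ENNReal.rpow_natCast (_ ^ (1/2:ℝ)) 2,
            ← ENNReal.rpow_natCast ((∫⁻ s in Ioc (0:ℝ) t, Kf t s * φ s ^ 2) ^ (1/2:ℝ)) 2,
            ← ENNReal.rpow_mul, ← ENNReal.rpow_mul]
          norm_num
      _ ≤ M * (∫⁻ s in Ioc (0:ℝ) t, Kf t s * φ s ^ 2) := mul_le_mul_left hAM _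
  -- step 3 : Tonelli setup
  set ψ : ℝ × ℝ → ℝ≥0∞ := fun q =>
    Set.indicator {q : ℝ × ℝ | 0 < q.2 ∧ q.2 ≤ q.1} (fun q => Kf q.1 q.2 * φ q.2 ^ 2) q with hψ
  have hset : MeasurableSet {q : ℝ × ℝ | 0 < q.2 ∧ q.2 ≤ q.1} :=
    (measurableSet_lt measurable_const measurable_snd).inter
      (measurableSet_le measurable_snd measurable_fst)
  have hψm : Measurable ψ :=
    (hK2.mul ((hφm.comp measurable_snd).pow_const 2)).indicator hset
  have hinner : ∀ t : ℝ, ∫⁻ s in Ioc (0:ℝ) t, Kf t s * φ s ^ 2 = ∫⁻ s, ψ (t, s) := by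
    intro t
    have heq : (fun s => ψ (t, s)) = (Ioc (0:ℝ) t).indicator (fun s => Kf t s * φ s ^ 2) := by
      funext s
      by_cases h : s ∈ Ioc (0:ℝ) t
      · simp only [hψ]
        rw [Set.indicator_of_mem h, Set.indicator_of_mem]
        exact ⟨h.1, h.2⟩
      · simp only [hψ]
        rw [Set.indicator_of_notMem h, Set.indicator_of_notMem]
        simpa [Set.mem_Ioc] using h
    rw [heq, lintegral_indicator measurableSet_Ioc]
  have hswap : ∫⁻ t in Ioc (0:ℝ) T, ∫⁻ s, ψ (t, s)
      = ∫⁻ s, ∫⁻ t in Ioc (0:ℝ) T, ψ (t, s) :=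
    lintegral_lintegral_swap (f := fun t s => ψ (t, s)) hψm.aemeasurable
  -- step 4 : inner bound after the swap
  have step4 : ∀ s : ℝ, (∫⁻ t in Ioc (0:ℝ) T, ψ (t, s))
      ≤ (Ioc (0:ℝ) T).indicator (fun s => M * φ s ^ 2) s := by
    intro s
    by_cases hs : s ∈ Ioc (0:ℝ) T
    · rw [Set.indicator_of_mem hs]
      have heq : (fun t => ψ (t, s)) = (Ici s).indicator (fun t => Kf t s * φ s ^ 2) := by
        funext t
        by_cases h : s ≤ t
        · simp only [hψ]
          rw [Set.indicator_of_mem (show (t,s) ∈ {q : ℝ × ℝ | 0 < q.2 ∧ q.2 ≤ q.1}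
            from ⟨hs.1, h⟩), Set.indicator_of_mem (show t ∈ Ici s from h)]
        · simp only [hψ]
          rw [Set.indicator_of_notMem (fun hh => h hh.2),
            Set.indicator_of_notMem (show t ∉ Ici s from h)]
      rw [heq, lintegral_indicator measurableSet_Ici,
        Measure.restrict_restrict measurableSet_Ici]
      have hseteq : Ici s ∩ Ioc (0:ℝ) T = Icc s T := by
        ext x
        simp only [Set.mem_inter_iff, Set.mem_Ici, Set.mem_Ioc, Set.mem_Icc]
        constructor
        · rintro ⟨h1, _, h3⟩
          exact ⟨h1, h3⟩
        · rintro ⟨h1, h2⟩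
          exact ⟨h1, hs.1.trans_le h1, h2⟩
      rw [hseteq, ← MeasureTheory.restrict_Ioc_eq_restrict_Icc,
        lintegral_mul_const' (φ s ^ 2) _ (ENNReal.pow_ne_top ENNReal.coe_ne_top),
        volterra_kmass2 hlam hs.2]
      refine mul_le_mul_left (ENNReal.ofReal_le_ofReal ?_) _
      have : Real.exp (-lam * T) ≤ Real.exp (-lam * (T - s)) :=
        Real.exp_le_exp.mpr (by nlinarith [hs.1])
      linarith
    · rw [Set.indicator_of_notMem hs]
      have h0 : ∀ᵐ t ∂(volume.restrict (Ioc (0:ℝ) T)), ψ (t, s) = 0 := by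
        filter_upwards [ae_restrict_mem measurableSet_Ioc] with t ht
        simp only [hψ]
        apply Set.indicator_of_notMem
        rintro ⟨h1, h2⟩
        exact hs ⟨h1, h2.trans ht.2⟩
      rw [lintegral_congr_ae h0, lintegral_zero]
  -- step 5 : put everything together
  calc ∫⁻ t in Ioc (0:ℝ) T,
        (‖(∫ s in Ioc (0:ℝ) t, (lam * Real.exp (-lam * (t - s))) • g s)‖₊ : ℝ≥0∞) ^ 2
      ≤ ∫⁻ t in Ioc (0:ℝ) T, M * ∫⁻ s in Ioc (0:ℝ) t, Kf t s * φ s ^ 2 := by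
        refine lintegral_mono_ae ?_
        filter_upwards [ae_restrict_mem measurableSet_Ioc] with t ht
        exact le_trans (pow_le_pow_left' (step1 t) 2) (step2 t ht)
    _ = M * ∫⁻ t in Ioc (0:ℝ) T, ∫⁻ s, ψ (t, s) := by
        rw [lintegral_const_mul' _ _ (hM ▸ ENNReal.ofReal_ne_top)]
        congr 1
        exact lintegral_congr fun t => hinner t
    _ = M * ∫⁻ s, ∫⁻ t in Ioc (0:ℝ) T, ψ (t, s) := by rw [hswap]
    _ ≤ M * ∫⁻ s, (Ioc (0:ℝ) T).indicator (fun s => M * φ s ^ 2) s :=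
        mul_le_mul_right (lintegral_mono step4) _
    _ = M * ∫⁻ s in Ioc (0:ℝ) T, M * φ s ^ 2 := by
        rw [lintegral_indicator measurableSet_Ioc]
    _ = M ^ 2 * ∫⁻ s in Ioc (0:ℝ) T, φ s ^ 2 := by
        rw [lintegral_const_mul' _ _ (hM ▸ ENNReal.ofReal_ne_top)]
        ring

set_option maxHeartbeats 1000000 in
private lemma volterra_F_eLpNorm {X : Type*} [NormedAddCommGroup X] [NormedSpace ℝ X]
    [CompleteSpace X] {T lam : ℝ} (hT : 0 < T) (hlam : 0 < lam) {g : ℝ → X}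
    (hg : StronglyMeasurable g) :
    eLpNorm (fun t => ∫ s in Ioc (0:ℝ) t, (lam * Real.exp (-lam * (t - s))) • g s) 2
        (volume.restrict (Ioc 0 T))
      ≤ ENNReal.ofReal (1 - Real.exp (-lam * T)) * eLpNorm g 2 (volume.restrict (Ioc 0 T)) := by
  rw [eLpNorm_eq_lintegral_rpow_enorm_toReal two_ne_zero ENNReal.ofNat_ne_top,
    eLpNorm_eq_lintegral_rpow_enorm_toReal two_ne_zero ENNReal.ofNat_ne_top]
  simp only [ENNReal.toReal_ofNat]
  simp_rw [show (2:ℝ) = ((2:ℕ):ℝ) by norm_num, ENNReal.rpow_natCast]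
  have h := volterra_F_bound hT hlam hg
  calc (∫⁻ t in Ioc (0:ℝ) T,
        (‖(∫ s in Ioc (0:ℝ) t, (lam * Real.exp (-lam * (t - s))) • g s)‖₊ : ℝ≥0∞) ^ 2)
          ^ (1 / ((2:ℕ):ℝ))
      ≤ (ENNReal.ofReal (1 - Real.exp (-lam * T)) ^ 2
          * ∫⁻ s in Ioc (0:ℝ) T, (‖g s‖₊ : ℝ≥0∞) ^ 2) ^ (1 / ((2:ℕ):ℝ)) :=
        ENNReal.rpow_le_rpow h (by norm_num)
    _ = ENNReal.ofReal (1 - Real.exp (-lam * T))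
          * (∫⁻ s in Ioc (0:ℝ) T, (‖g s‖₊ : ℝ≥0∞) ^ 2) ^ (1 / ((2:ℕ):ℝ)) := by
        rw [ENNReal.mul_rpow_of_nonneg _ _ (by norm_num : (0:ℝ) ≤ 1 / ((2:ℕ):ℝ)),
          ← ENNReal.rpow_natCast (ENNReal.ofReal (1 - Real.exp (-lam * T))) 2,
          ← ENNReal.rpow_mul]
        norm_num

set_option maxHeartbeats 1000000 in
/-- If `B : V_B → V_B^*` is linear and bounded with constant `β_B`, then the composed
operator `BK` maps `L²(0,T;V_B)` into `L²(0,T;V_B^*)`, is affine-linear and bounded, and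
satisfies `‖BKv − Bu₀‖_{L²(0,T;V_B^*)} ≤ β_B (1 − e^{−λT}) ‖v‖_{L²(0,T;V_B)}`. -/
theorem BK_L2_bound
    (VB : Type*) [NormedAddCommGroup VB] [InnerProductSpace ℝ VB] [CompleteSpace VB]
    (T lam βB : ℝ) (hT : 0 < T) (hlam : 0 < lam) (hβB : 0 < βB) (u₀ : VB)
    (B : VB →ₗ[ℝ] StrongDual ℝ VB) (hB : ∀ x : VB, ‖B x‖ ≤ βB * ‖x‖) :
    (∀ v : ℝ → VB, MemLp v 2 (volume.restrict (Ioc 0 T)) →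
      MemLp (fun t => B (volterraK lam u₀ v t)) 2 (volume.restrict (Ioc 0 T)) ∧
      eLpNorm (fun t => B (volterraK lam u₀ v t) - B u₀) 2 (volume.restrict (Ioc 0 T)) ≤
        ENNReal.ofReal (βB * (1 - Real.exp (-lam * T))) *
          eLpNorm v 2 (volume.restrict (Ioc 0 T))) ∧
    -- affine-linearity: `v ↦ BKv − Bu₀` is additive and homogeneous
    (∀ v w : ℝ → VB, MemLp v 2 (volume.restrict (Ioc 0 T)) →
      MemLp w 2 (volume.restrict (Ioc 0 T)) → ∀ t ∈ Icc (0 : ℝ) T,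
      B (volterraK lam u₀ (v + w) t) =
        B (volterraK lam u₀ v t) + B (volterraK lam u₀ w t) - B u₀) ∧
    (∀ (c : ℝ) (v : ℝ → VB), MemLp v 2 (volume.restrict (Ioc 0 T)) → ∀ t ∈ Icc (0 : ℝ) T,
      B (volterraK lam u₀ (c • v) t) =
        c • (B (volterraK lam u₀ v t) - B u₀) + B u₀) := by
  have hfin : IsFiniteMeasure (volume.restrict (Ioc (0:ℝ) T)) :=
    ⟨by rw [Measure.restrict_apply_univ]; exact measure_Ioc_lt_top⟩
  -- a continuous version of B
  let Bc : VB →L[ℝ] StrongDual ℝ VB := B.mkContinuous βB hB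
  have hBc : ∀ x, Bc x = B x := fun x => rfl
  -- integrability of the kernel-weighted integrand
  have hker_int : ∀ (u : ℝ → VB), MemLp u 2 (volume.restrict (Ioc 0 T)) →
      ∀ t ∈ Icc (0:ℝ) T,
      Integrable (fun s => (lam * Real.exp (-lam * (t - s))) • u s)
        (volume.restrict (Ioc (0:ℝ) t)) := by
    intro u hu t ht
    haveI := hfin
    have hui : Integrable u (volume.restrict (Ioc (0:ℝ) T)) :=
      hu.integrable (by norm_num)
    have hui' : Integrable u (volume.restrict (Ioc (0:ℝ) t)) :=
      hui.mono_measure (Measure.restrict_mono (Ioc_subset_Ioc_right ht.2) le_rfl)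
    have hbd : MemLp (fun s : ℝ => lam * Real.exp (-lam * (t - s))) ⊤
        (volume.restrict (Ioc (0:ℝ) t)) := by
      apply memLp_top_of_bound ((Continuous.aestronglyMeasurable (by continuity))) lam
      filter_upwards [ae_restrict_mem measurableSet_Ioc] with s hs
      rw [Real.norm_eq_abs, abs_of_nonneg (by positivity)]
      nlinarith [Real.exp_le_one_iff.mpr (by nlinarith [hs.2] : -lam * (t - s) ≤ 0),
        Real.exp_pos (-lam * (t - s))]
    exact hui'.smul_of_top_right hbd
  refine ⟨?_, ?_, ?_⟩
  · -- main L² bound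
    intro v hv
    set μT := volume.restrict (Ioc (0:ℝ) T) with hμT
    obtain ⟨g, hgm, hvg⟩ := hv.aestronglyMeasurable
    have hgL2 : MemLp g 2 μT := hv.ae_eq hvg
    -- v and g give a.e. the same Volterra integrals
    have hVeq : ∀ t ∈ Icc (0:ℝ) T, volterraK lam u₀ v t = volterraK lam u₀ g t := by
      intro t ht
      unfold volterraK
      congr 1
      apply integral_congr_ae
      have h1 : ∀ᵐ s ∂(volume.restrict (Ioc (0:ℝ) t)), v s = g s :=
        ae_restrict_of_ae_restrict_of_subset (Ioc_subset_Ioc_right ht.2) hvg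
      filter_upwards [h1] with s hs
      rw [hs]
    set F : ℝ → VB := fun t => ∫ s in Ioc (0:ℝ) t, (lam * Real.exp (-lam * (t - s))) • g s
      with hF
    have hFsm : StronglyMeasurable F := volterra_F_sm lam hgm
    have hBF : ∀ t, B (volterraK lam u₀ g t) = B u₀ + B (F t) := by
      intro t
      rw [volterraK, map_add]
    -- strong measurability of B ∘ F
    have hBFsm : StronglyMeasurable (fun t => B (F t)) :=
      Bc.continuous.comp_stronglyMeasurable hFsm
    -- eLpNorm bound for B ∘ F
    have hBF_le : eLpNorm (fun t => B (F t)) 2 μT ≤ ENNReal.ofReal βB * eLpNorm F 2 μT := by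
      apply eLpNorm_le_mul_eLpNorm_of_ae_le_mul
      filter_upwards with t
      exact hB (F t)
    have hF_le : eLpNorm F 2 μT
        ≤ ENNReal.ofReal (1 - Real.exp (-lam * T)) * eLpNorm g 2 μT :=
      volterra_F_eLpNorm hT hlam hgm
    have hg_lt : eLpNorm g 2 μT < ⊤ := hgL2.2
    have hBF_lt : eLpNorm (fun t => B (F t)) 2 μT < ⊤ := by
      refine lt_of_le_of_lt (hBF_le.trans (mul_le_mul_right hF_le _)) ?_
      exact ENNReal.mul_lt_top ENNReal.ofReal_lt_top
        (ENNReal.mul_lt_top ENNReal.ofReal_lt_top hg_lt)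
    have hBFmem : MemLp (fun t => B (F t)) 2 μT := ⟨hBFsm.aestronglyMeasurable, hBF_lt⟩
    constructor
    · -- membership
      have hmem : MemLp (fun t => B u₀ + B (F t)) 2 μT := (memLp_const (B u₀)).add hBFmem
      refine hmem.ae_eq ?_
      filter_upwards [ae_restrict_mem measurableSet_Ioc] with t ht
      rw [← hBF, hVeq t ⟨ht.1.le, ht.2⟩]
    · -- the norm bound
      have he1 : (fun t => B (volterraK lam u₀ v t) - B u₀) =ᵐ[μT] fun t => B (F t) := by
        filter_upwards [ae_restrict_mem measurableSet_Ioc] with t ht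
        rw [hVeq t ⟨ht.1.le, ht.2⟩, hBF]
        abel
      rw [eLpNorm_congr_ae he1, eLpNorm_congr_ae hvg]
      calc eLpNorm (fun t => B (F t)) 2 μT
          ≤ ENNReal.ofReal βB
              * (ENNReal.ofReal (1 - Real.exp (-lam * T)) * eLpNorm g 2 μT) :=
            hBF_le.trans (mul_le_mul_right hF_le _)
        _ = ENNReal.ofReal (βB * (1 - Real.exp (-lam * T))) * eLpNorm g 2 μT := by
            rw [ENNReal.ofReal_mul hβB.le, mul_assoc]
  · -- additivity
    intro v w hv hw t ht
    have hvint := hker_int v hv t ht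
    have hwint := hker_int w hw t ht
    have hsum : volterraK lam u₀ (v + w) t
        = u₀ + ((∫ s in Ioc (0:ℝ) t, (lam * Real.exp (-lam * (t - s))) • v s)
          + ∫ s in Ioc (0:ℝ) t, (lam * Real.exp (-lam * (t - s))) • w s) := by
      unfold volterraK
      congr 1
      rw [← integral_add hvint hwint]
      apply integral_congr_ae
      filter_upwards with s
      simp [smul_add]
    rw [hsum, volterraK, volterraK, map_add, map_add, map_add, map_add]
    abel
  · -- homogeneity
    intro c v hv t ht
    have hsmul : volterraK lam u₀ (c • v) t
        = u₀ + c • ∫ s in Ioc (0:ℝ) t, (lam * Real.exp (-lam * (t - s))) • v s := by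
      unfold volterraK
      congr 1
      rw [← integral_smul]
      apply integral_congr_ae
      filter_upwards with s
      rw [Pi.smul_apply, smul_comm]
    rw [hsmul, volterraK, map_add, map_add, B.map_smul]
    simp only [add_sub_cancel_left]
    abel
end

section
/- Let V be a real reflexive separable Banach space whose dual V^* is separable, and let A : V → V^* be monotone (⟨Au − Av, u − v⟩ ≥ 0 for all u, v ∈ V) and hemicontinuous (for all u, v, w ∈ V the map θ ↦ ⟨A(u + θv), w⟩ is continuous on [0,1]). Then for every Bochner measurable function v : [0,T] → V, the function t ↦ A(v(t)) is a Bochner measurable function from [0,T] into V^*. -/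
open MeasureTheory Real Set NormedSpace

open Filter Topology

private lemma monotone_loc_bdd
    {V : Type*} [NormedAddCommGroup V] [NormedSpace ℝ V] [CompleteSpace V]
    (A : V → StrongDual ℝ V) (hAmono : ∀ u v : V, 0 ≤ (A u - A v) (u - v))
    {u : V} {uu : ℕ → V} (huu : Tendsto uu atTop (𝓝 u)) :
    ∃ M : ℝ, ∀ n, ‖A (uu n)‖ ≤ M := by
  have hd : Tendsto (fun n => ‖uu n - u‖) atTop (𝓝 0) := by
    simpa using (huu.sub_const u).norm
  obtain ⟨K, hK⟩ := hd.bddAbove_range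
  have hK' : ∀ n, ‖uu n - u‖ ≤ K := fun n => hK ⟨n, rfl⟩
  set α : ℕ → ℝ := fun n => 1 + ‖A (uu n)‖ * ‖uu n - u‖ with hα
  have hα1 : ∀ n, 1 ≤ α n := fun n => by
    have := mul_nonneg (norm_nonneg (A (uu n))) (norm_nonneg (uu n - u)); simp [hα]; linarith
  have hαpos : ∀ n, 0 < α n := fun n => lt_of_lt_of_le one_pos (hα1 n)
  set T : ℕ → V →L[ℝ] ℝ := fun n => (α n)⁻¹ • A (uu n) with hT
  -- pointwise one-sided bound
  have hside : ∀ (z : V) (n : ℕ), T n z ≤ 1 + ‖A (u + z)‖ * (K + ‖z‖) := by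
    intro z n
    have hmono := hAmono (uu n) (u + z)
    have hexp : A (uu n) z ≤ A (uu n) (uu n - u) - A (u + z) (uu n - u - z) := by
      have h1 : (A (uu n) - A (u + z)) (uu n - (u + z))
          = A (uu n) (uu n - u) - A (uu n) z - A (u + z) (uu n - u - z) := by
        simp only [ContinuousLinearMap.sub_apply, map_sub, sub_add_eq_sub_sub]
        ring
      linarith [h1 ▸ hmono]
    have h2 : A (uu n) (uu n - u) ≤ ‖A (uu n)‖ * ‖uu n - u‖ :=
      le_trans (le_abs_self _) ((A (uu n)).le_opNorm _)
    have h3 : - A (u + z) (uu n - u - z) ≤ ‖A (u + z)‖ * (K + ‖z‖) := by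
      have := (A (u + z)).le_opNorm (uu n - u - z)
      have hnz : ‖uu n - u - z‖ ≤ K + ‖z‖ :=
        le_trans (norm_sub_le _ _) (by linarith [hK' n])
      have habs : |A (u + z) (uu n - u - z)| ≤ ‖A (u + z)‖ * (K + ‖z‖) :=
        le_trans this (mul_le_mul_of_nonneg_left hnz (norm_nonneg _))
      linarith [abs_le.mp habs]
    have hz : A (uu n) z ≤ ‖A (uu n)‖ * ‖uu n - u‖ + ‖A (u + z)‖ * (K + ‖z‖) := by linarith
    have : T n z = (α n)⁻¹ * A (uu n) z := by simp [hT]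
    rw [this]
    have hαinv : (α n)⁻¹ ≤ 1 := by
      rw [inv_le_one_iff₀]; right; exact hα1 n
    have hαinvpos : 0 < (α n)⁻¹ := inv_pos.mpr (hαpos n)
    calc (α n)⁻¹ * A (uu n) z
        ≤ (α n)⁻¹ * (‖A (uu n)‖ * ‖uu n - u‖ + ‖A (u + z)‖ * (K + ‖z‖)) := by
          exact mul_le_mul_of_nonneg_left hz hαinvpos.le
      _ = (α n)⁻¹ * (‖A (uu n)‖ * ‖uu n - u‖) + (α n)⁻¹ * (‖A (u + z)‖ * (K + ‖z‖)) := by ring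
      _ ≤ 1 + ‖A (u + z)‖ * (K + ‖z‖) := by
          have h4 : (α n)⁻¹ * (‖A (uu n)‖ * ‖uu n - u‖) ≤ 1 := by
            rw [inv_mul_le_iff₀ (hαpos n)]
            have : α n = 1 + ‖A (uu n)‖ * ‖uu n - u‖ := rfl
            rw [this]; linarith
          have h5 : 0 ≤ ‖A (u + z)‖ * (K + ‖z‖) := by
            have : (0:ℝ) ≤ K := le_trans (norm_nonneg _) (hK' 0)
            positivity
          nlinarith [hαinv, h5]
  have hpt : ∀ z : V, ∃ C, ∀ n, ‖T n z‖ ≤ C := by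
    intro z
    refine ⟨max (1 + ‖A (u + z)‖ * (K + ‖z‖)) (1 + ‖A (u + -z)‖ * (K + ‖-z‖)), fun n => ?_⟩
    rw [Real.norm_eq_abs, abs_le]
    constructor
    · have := hside (-z) n
      have hneg : T n (-z) = - T n z := map_neg _ _
      rw [hneg] at this
      have := neg_le_neg this
      simp only [neg_neg] at this
      exact le_trans (neg_le_neg (le_max_right _ _)) (by linarith)
    · exact le_trans (hside z n) (le_max_left _ _)
  obtain ⟨C', hC'⟩ := banach_steinhaus hpt
  set C := max C' 0 with hC
  have hCnn : (0:ℝ) ≤ C := le_max_right _ _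
  have hnorm : ∀ n, ‖A (uu n)‖ ≤ C * α n := by
    intro n
    have : ‖T n‖ = (α n)⁻¹ * ‖A (uu n)‖ := by
      show ‖(α n)⁻¹ • A (uu n)‖ = _
      rw [norm_smul, Real.norm_eq_abs, abs_of_pos (inv_pos.mpr (hαpos n))]
    have h := hC' n
    rw [this, inv_mul_le_iff₀ (hαpos n)] at h
    calc ‖A (uu n)‖ ≤ C' * α n := by linarith
      _ ≤ C * α n := mul_le_mul_of_nonneg_right (le_max_left _ _) (hαpos n).le
  obtain ⟨N, hN⟩ := (hd.eventually_lt_const (show (0:ℝ) < (2 * (C + 1))⁻¹ by positivity)).exists_forall_of_atTop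
  have htail : ∀ n, N ≤ n → ‖A (uu n)‖ ≤ 2 * C := by
    intro n hn
    have h1 := hnorm n
    have h2 := (hN n hn).le
    have h3 : (0:ℝ) ≤ ‖A (uu n)‖ := norm_nonneg _
    have h4 : (0:ℝ) ≤ ‖uu n - u‖ := norm_nonneg _
    have h5 : ‖A (uu n)‖ * ‖uu n - u‖ ≤ ‖A (uu n)‖ * (2 * (C + 1))⁻¹ :=
      mul_le_mul_of_nonneg_left h2 h3
    have h6 : (0:ℝ) < 2 * (C + 1) := by positivity
    rw [hα] at h1
    simp only at h1
    nlinarith [mul_le_mul_of_nonneg_left h5 hCnn,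
      mul_pos (inv_pos.mpr h6) h6, inv_mul_cancel₀ (ne_of_gt h6)]
  refine ⟨2 * C + ∑ i ∈ Finset.range N, ‖A (uu i)‖, fun n => ?_⟩
  have hsumnn : (0:ℝ) ≤ ∑ i ∈ Finset.range N, ‖A (uu i)‖ :=
    Finset.sum_nonneg fun i _ => norm_nonneg _
  rcases le_or_gt N n with h | h
  · linarith [htail n h]
  · have : ‖A (uu n)‖ ≤ ∑ i ∈ Finset.range N, ‖A (uu i)‖ :=
      Finset.single_le_sum (fun i _ => norm_nonneg (A (uu i))) (Finset.mem_range.mpr h)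
    linarith


private lemma monotone_hemi_cont
    {V : Type*} [NormedAddCommGroup V] [NormedSpace ℝ V] [CompleteSpace V]
    (A : V → StrongDual ℝ V) (hAmono : ∀ u v : V, 0 ≤ (A u - A v) (u - v))
    (hAhemi : ∀ u v w : V, ContinuousOn (fun θ : ℝ => A (u + θ • v) w) (Icc 0 1))
    (w : V) : Continuous fun u => A u w := by
  rw [continuous_iff_seqContinuous]
  intro uu u huu
  obtain ⟨M, hM⟩ := monotone_loc_bdd A hAmono huu
  have hM0 : (0:ℝ) ≤ M := le_trans (norm_nonneg _) (hM 0)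
  -- key one-sided estimate for limits along subsequences
  have key : ∀ (ω : V) (ℓ : ℝ) (m : ℕ → ℕ), Tendsto (fun k => uu (m k)) atTop (𝓝 u) →
      Tendsto (fun k => A (uu (m k)) ω) atTop (𝓝 ℓ) → ℓ ≤ A u ω := by
    intro ω ℓ m hm hl
    have hdm : Tendsto (fun k => ‖uu (m k) - u‖) atTop (𝓝 0) := by
      simpa using (hm.sub_const u).norm
    have step1 : ∀ θ ∈ Ioc (0:ℝ) 1, ℓ ≤ A (u + θ • ω) ω := by
      rintro θ ⟨hθ0, hθ1⟩
      set q := A (u + θ • ω) with hq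
      have hineq : ∀ k, θ * (A (uu (m k)) ω)
          ≤ θ * q ω + (A (uu (m k)) (uu (m k) - u) - q (uu (m k) - u)) := by
        intro k
        have hmono := hAmono (uu (m k)) (u + θ • ω)
        have h1 : (A (uu (m k)) - q) (uu (m k) - (u + θ • ω))
            = (A (uu (m k)) (uu (m k) - u) - θ * (A (uu (m k)) ω))
              - (q (uu (m k) - u) - θ * q ω) := by
          simp only [ContinuousLinearMap.sub_apply, map_sub, _root_.map_smul, smul_eq_mul,
            sub_add_eq_sub_sub]
          ring
        rw [h1] at hmono
        linarith
      -- limits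
      have hbd : Tendsto (fun k => A (uu (m k)) (uu (m k) - u)) atTop (𝓝 0) := by
        have hg : Tendsto (fun k => M * ‖uu (m k) - u‖) atTop (𝓝 0) := by
          simpa using hdm.const_mul M
        refine squeeze_zero_norm (fun k => ?_) hg
        exact le_trans ((A (uu (m k))).le_opNorm _)
          (mul_le_mul_of_nonneg_right (hM (m k)) (norm_nonneg _))
      have hq0 : Tendsto (fun k => q (uu (m k) - u)) atTop (𝓝 0) := by
        have : Tendsto (fun k => uu (m k) - u) atTop (𝓝 0) := by
          simpa using hm.sub_const u
        have h := (q.continuous.tendsto 0).comp this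
        simpa [Function.comp_def] using h
      have hrhs : Tendsto
          (fun k => θ * q ω + (A (uu (m k)) (uu (m k) - u) - q (uu (m k) - u)))
          atTop (𝓝 (θ * q ω)) := by
        have := (hbd.sub hq0).const_add (θ * q ω)
        simpa using this
      have hlhs : Tendsto (fun k => θ * (A (uu (m k)) ω)) atTop (𝓝 (θ * ℓ)) :=
        hl.const_mul θ
      have := le_of_tendsto_of_tendsto' hlhs hrhs hineq
      exact le_of_mul_le_mul_left (by linarith) hθ0
    -- let θ → 0⁺
    have h0cl : (0:ℝ) ∈ closure (Ioc (0:ℝ) 1) := by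
      rw [closure_Ioc one_ne_zero.symm]
      exact ⟨le_refl 0, zero_le_one⟩
    haveI : (𝓝[Ioc (0:ℝ) 1] 0).NeBot := mem_closure_iff_nhdsWithin_neBot.mp h0cl
    have htend : Tendsto (fun θ : ℝ => A (u + θ • ω) ω) (𝓝[Ioc (0:ℝ) 1] 0) (𝓝 (A u ω)) := by
      have hc := (hAhemi u ω ω).continuousWithinAt
        (x := 0) ⟨le_refl 0, zero_le_one⟩
      have : Tendsto (fun θ : ℝ => A (u + θ • ω) ω) (𝓝[Icc (0:ℝ) 1] 0)
          (𝓝 (A (u + (0:ℝ) • ω) ω)) := hc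
      simp only [zero_smul, add_zero] at this
      exact this.mono_left (nhdsWithin_mono _ Ioc_subset_Icc_self)
    exact ge_of_tendsto htend (eventually_mem_nhdsWithin.mono step1)
  -- conclude by subsequence argument
  apply tendsto_of_subseq_tendsto
  intro ns hns
  have hbound : ∀ k, (A (uu (ns k)) w) ∈ Metric.closedBall (0:ℝ) (M * ‖w‖) := by
    intro k
    rw [Metric.mem_closedBall, Real.dist_eq, sub_zero, ← Real.norm_eq_abs]
    exact le_trans ((A (uu (ns k))).le_opNorm w)
      (mul_le_mul_of_nonneg_right (hM (ns k)) (norm_nonneg w))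
  obtain ⟨ℓ, -, φ, hφmono, hφtend⟩ :=
    tendsto_subseq_of_bounded Metric.isBounded_closedBall hbound
  refine ⟨φ, ?_⟩
  have hsub : Tendsto (fun k => uu (ns (φ k))) atTop (𝓝 u) :=
    huu.comp (hns.comp hφmono.tendsto_atTop)
  have hφtend' : Tendsto (fun k => A (uu (ns (φ k))) w) atTop (𝓝 ℓ) := hφtend
  have h1 : ℓ ≤ A u w := key w ℓ (fun k => ns (φ k)) hsub hφtend'
  have h2 : -ℓ ≤ A u (-w) := by
    refine key (-w) (-ℓ) (fun k => ns (φ k)) hsub ?_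
    have hneg : (fun k => A (uu (ns (φ k))) (-w)) = fun k => -(A (uu (ns (φ k))) w) := by
      funext k; exact map_neg _ _
    rw [hneg]
    exact hφtend'.neg
  simp only [map_neg] at h2
  have hlw : ℓ = A u w := le_antisymm h1 (by linarith)
  have hfin : Tendsto (fun k => A (uu (ns (φ k))) w) atTop (𝓝 (A u w)) := by
    rw [← hlw]; exact hφtend'
  exact hfin


private lemma dual_norm_eq_ciSup
    {V : Type*} [NormedAddCommGroup V] [NormedSpace ℝ V]
    (e : ℕ → V) (he : DenseRange e) (φ : StrongDual ℝ V) :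
    ‖φ‖ = ⨆ n, |φ (e n)| / ‖e n‖ := by
  have hle : ∀ n, |φ (e n)| / ‖e n‖ ≤ ‖φ‖ := by
    intro n
    rcases eq_or_ne ‖e n‖ 0 with h | h
    · rw [h, div_zero]; exact norm_nonneg φ
    · rw [div_le_iff₀ (lt_of_le_of_ne (norm_nonneg _) (Ne.symm h))]
      exact φ.le_opNorm _
  have hbdd : BddAbove (range fun n => |φ (e n)| / ‖e n‖) :=
    ⟨‖φ‖, by rintro x ⟨n, rfl⟩; exact hle n⟩
  refine le_antisymm ?_ (ciSup_le hle)
  set S := ⨆ n, |φ (e n)| / ‖e n‖ with hS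
  have hS0 : 0 ≤ S := le_trans (by positivity) (le_ciSup hbdd 0)
  refine φ.opNorm_le_bound hS0 fun x => ?_
  have hn : ∀ n, |φ (e n)| ≤ S * ‖e n‖ := by
    intro n
    rcases eq_or_ne ‖e n‖ 0 with h | h
    · have h0 : e n = 0 := norm_eq_zero.mp h
      simp [h0]
    · rw [← div_le_iff₀ (lt_of_le_of_ne (norm_nonneg _) (Ne.symm h))]
      exact le_ciSup hbdd n
  obtain ⟨y, hy_mem, hy_tend⟩ := mem_closure_iff_seq_limit.mp (he x)
  have h1 : ∀ k, |φ (y k)| ≤ S * ‖y k‖ := by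
    intro k
    obtain ⟨n, hn'⟩ := hy_mem k
    rw [← hn']
    exact hn n
  have h2 : Tendsto (fun k => |φ (y k)|) atTop (𝓝 |φ x|) :=
    ((φ.continuous.tendsto x).comp hy_tend).abs
  have h3 : Tendsto (fun k => S * ‖y k‖) atTop (𝓝 (S * ‖x‖)) :=
    (hy_tend.norm).const_mul S
  exact le_of_tendsto_of_tendsto' h2 h3 h1

private lemma stronglyMeasurable_of_norm_measurable
    {X : Type*} [NormedAddCommGroup X] [TopologicalSpace.SeparableSpace X] {f : ℝ → X}
    (h : ∀ g : X, Measurable fun t => ‖f t - g‖) :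
    MeasureTheory.StronglyMeasurable f := by
  borelize X
  haveI : SecondCountableTopology X := UniformSpace.secondCountable_of_separable _
  have hB : TopologicalSpace.IsTopologicalBasis
      {s : Set X | ∃ g : X, ∃ r : ℝ, 0 < r ∧ s = Metric.ball g r} := by
    apply TopologicalSpace.isTopologicalBasis_of_isOpen_of_nhds
    · rintro u ⟨g, r, hr, rfl⟩; exact Metric.isOpen_ball
    · intro a u ha hu
      obtain ⟨r, hr, hball⟩ := Metric.isOpen_iff.mp hu a ha
      exact ⟨Metric.ball a r, ⟨a, r, hr, rfl⟩, Metric.mem_ball_self hr, hball⟩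
  have key : @Measurable ℝ X _ (MeasurableSpace.generateFrom
      {s : Set X | ∃ g : X, ∃ r : ℝ, 0 < r ∧ s = Metric.ball g r}) f := by
    apply measurable_generateFrom
    rintro s ⟨g, r, hr, rfl⟩
    have hpre : f ⁻¹' Metric.ball g r = {t | ‖f t - g‖ < r} := by
      ext t; simp [Metric.mem_ball, dist_eq_norm]
    rw [hpre]
    exact measurableSet_lt (h g) measurable_const
  have hmeas : Measurable f := key.mono le_rfl (le_of_eq hB.borel_eq_generateFrom)
  exact hmeas.stronglyMeasurable

/-- Let `V` be a real reflexive separable Banach space with separable dual, and let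
`A : V → V^*` be monotone and hemicontinuous. Then `A` maps Bochner measurable functions
`v : [0,T] → V` into Bochner measurable functions `t ↦ A(v(t))` with values in `V^*`. -/
theorem stronglyMeasurable_comp_monotone_hemicontinuous
    (V : Type*) [NormedAddCommGroup V] [NormedSpace ℝ V] [CompleteSpace V]
    [TopologicalSpace.SeparableSpace V] [TopologicalSpace.SeparableSpace (StrongDual ℝ V)]
    (hrefl : Function.Surjective (NormedSpace.inclusionInDoubleDual ℝ V))
    (A : V → StrongDual ℝ V)
    (hAmono : ∀ u v : V, 0 ≤ (A u - A v) (u - v))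
    (hAhemi : ∀ u v w : V, ContinuousOn (fun θ : ℝ => A (u + θ • v) w) (Icc 0 1))
    (T : ℝ) (hT : 0 < T)
    (v : ℝ → V) (hv : MeasureTheory.StronglyMeasurable v) :
    MeasureTheory.StronglyMeasurable (fun t : ℝ => A (v t)) := by
  haveI : Nonempty V := ⟨0⟩
  have hcont : ∀ w : V, Continuous fun u => A u w := monotone_hemi_cont A hAmono hAhemi
  have heval : ∀ w : V, Measurable fun t => A (v t) w := fun w =>
    ((hcont w).comp_stronglyMeasurable hv).measurable
  set e : ℕ → V := TopologicalSpace.denseSeq V with he'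
  have he : DenseRange e := TopologicalSpace.denseRange_denseSeq V
  apply stronglyMeasurable_of_norm_measurable
  intro g
  have hrw : (fun t => ‖A (v t) - g‖) = fun t => ⨆ n, |A (v t) (e n) - g (e n)| / ‖e n‖ := by
    funext t
    rw [dual_norm_eq_ciSup e he (A (v t) - g)]
    simp only [ContinuousLinearMap.sub_apply]
  rw [hrw]
  exact Measurable.iSup fun n =>
    (((heval (e n)).sub measurable_const).abs).div_const _
end
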